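/- Let k, γ be complex numbers with k ≠ γ and β ≠ 0. Consider the 2×2 complex matrices C̃ = [[0, −kγ],[1, −k−γ]], D̃ = β·[[0,k],[0,1]] (i.e., β times column (k,1)ᵀ times row (0,1)), and Ẽ = β·[[0,γ],[0,1]]. If both commutators [D̃C̃, Ẽ] and [ẼC̃, D̃] have rank at most 1, then k = 0 and γ = 0. -/
import Mathlib

lemma det_eq_zero_of_rank_le_one (A : Matrix (Fin 2) (Fin 2) ℂ)
    (h : A.rank ≤ 1) : A.det = 0 := by
  by_contra hd
  have hu : IsUnit A := (Matrix.isUnit_iff_isUnit_det A).2 (isUnit_iff_ne_zero.2 hd)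
  have := Matrix.rank_of_isUnit A hu
  simp [Fintype.card_fin] at this
  omega

theorem stmt_6 (k γ β : ℂ) (hkγ : k ≠ γ) (hβ : β ≠ 0)
    (C : Matrix (Fin 2) (Fin 2) ℂ) (D E : Matrix (Fin 2) (Fin 2) ℂ)
    (hC : C = !![0, -(k * γ); 1, -k - γ])
    (hD : D = β • Matrix.vecMulVec ![k, 1] ![0, 1])
    (hE : E = β • Matrix.vecMulVec ![γ, 1] ![0, 1])
    (h1 : ((D * C) * E - E * (D * C)).rank ≤ 1)
    (h2 : ((E * C) * D - D * (E * C)).rank ≤ 1) :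
    k = 0 ∧ γ = 0 := by
  have hD' : D = !![0, β * k; 0, β] := by
    subst hD; ext i j; fin_cases i <;> fin_cases j <;>
      simp [Matrix.vecMulVec_apply, mul_comm]
  have hE' : E = !![0, β * γ; 0, β] := by
    subst hE; ext i j; fin_cases i <;> fin_cases j <;>
      simp [Matrix.vecMulVec_apply, mul_comm]
  have d1 := det_eq_zero_of_rank_le_one _ h1
  have d2 := det_eq_zero_of_rank_le_one _ h2
  rw [hC, hD', hE'] at d1 d2
  simp only [Matrix.mul_fin_two, Matrix.det_fin_two, Matrix.sub_apply,
    Matrix.of_apply, Matrix.cons_val', Matrix.cons_val_zero, Matrix.cons_val_one,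
    Matrix.head_cons, Matrix.head_fin_const, Matrix.empty_val',
    Matrix.cons_val_fin_one] at d1 d2
  have hb4 : β * β * (β * β) ≠ 0 := by
    exact mul_ne_zero (mul_ne_zero hβ hβ) (mul_ne_zero hβ hβ)
  have e1 : β * β * (β * β) * (k * (γ - k)) = 0 := by linear_combination d1
  have e2 : β * β * (β * β) * (γ * (k - γ)) = 0 := by linear_combination d2
  have hk : k = 0 := by
    rcases mul_eq_zero.1 e1 with h | h
    · exact absurd h hb4
    · rcases mul_eq_zero.1 h with h | h
      · exact h
      · exact absurd (sub_eq_zero.1 h).symm hkγ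
  have hg : γ = 0 := by
    rcases mul_eq_zero.1 e2 with h | h
    · exact absurd h hb4
    · rcases mul_eq_zero.1 h with h | h
      · exact h
      · exact absurd (sub_eq_zero.1 h) hkγ
  exact ⟨hk, hg⟩
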